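/- The quaternion matrix nuclear norm is well defined: if Q ∈ ℍ^{N₁×N₂} has two QSVDs Q = U Λ Vᴴ = U' Λ' V'ᴴ, then the sums of the diagonal entries of Λ and of Λ' coincide, and both equal ½ Σ_j sqrt(λ_j), where λ_j runs over the eigenvalues (with multiplicity) of the Hermitian positive semidefinite complex matrix f(Q)ᴴ f(Q). -/

import Mathlib

open Matrix

noncomputable section

/-- The two complex components of the Cayley–Dickson form of a quaternion. -/
def qC1 (q : Quaternion ℝ) : ℂ := ⟨q.re, q.imI⟩
def qC2 (q : Quaternion ℝ) : ℂ := ⟨q.imJ, q.imK⟩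

/-- The isomorphic complex representation `f` of a quaternion matrix:
`f(Q) = [[Z₁, Z₂], [−Z₂*, Z₁*]]` with `Z₁ = Q₀ + Q₁ i`, `Z₂ = Q₂ + Q₃ i`. -/
def qf {N₁ N₂ : ℕ} (Q : Matrix (Fin N₁) (Fin N₂) (Quaternion ℝ)) :
    Matrix (Fin N₁ ⊕ Fin N₁) (Fin N₂ ⊕ Fin N₂) ℂ :=
  Matrix.fromBlocks (Matrix.of fun m n => qC1 (Q m n)) (Matrix.of fun m n => qC2 (Q m n))
    (Matrix.of fun m n => -star (qC2 (Q m n))) (Matrix.of fun m n => star (qC1 (Q m n)))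

/-- A square quaternion matrix is unitary if `U Uᴴ = Uᴴ U = I`. -/
def qUnitary {N : ℕ} (U : Matrix (Fin N) (Fin N) (Quaternion ℝ)) : Prop :=
  U * Uᴴ = 1 ∧ Uᴴ * U = 1

/-- A rectangular real matrix is "rectangular diagonal with nonnegative diagonal entries". -/
def recDiagNonneg {N₁ N₂ : ℕ} (Λ : Matrix (Fin N₁) (Fin N₂) ℝ) : Prop :=
  (∀ (m : Fin N₁) (n : Fin N₂), (m : ℕ) ≠ (n : ℕ) → Λ m n = 0) ∧ ∀ m n, 0 ≤ Λ m n

/-- View a real matrix as a quaternion matrix. -/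
def rToQ {N₁ N₂ : ℕ} (Λ : Matrix (Fin N₁) (Fin N₂) ℝ) :
    Matrix (Fin N₁) (Fin N₂) (Quaternion ℝ) :=
  Λ.map (algebraMap ℝ (Quaternion ℝ))

/-- `IsQSVD Q U Λ V` : `Q = U Λ Vᴴ` is a quaternion singular value decomposition. -/
def IsQSVD {N₁ N₂ : ℕ} (Q : Matrix (Fin N₁) (Fin N₂) (Quaternion ℝ))
    (U : Matrix (Fin N₁) (Fin N₁) (Quaternion ℝ))
    (Λ : Matrix (Fin N₁) (Fin N₂) ℝ)
    (V : Matrix (Fin N₂) (Fin N₂) (Quaternion ℝ)) : Prop :=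
  qUnitary U ∧ qUnitary V ∧ recDiagNonneg Λ ∧ Q = U * rToQ Λ * Vᴴ

/-- The quaternion nuclear norm: `½ Σ_j sqrt(λ_j)`, `λ_j` the eigenvalues of `f(X)ᴴ f(X)`. -/
noncomputable def qNuclearNorm {N₁ N₂ : ℕ}
    (X : Matrix (Fin N₁) (Fin N₂) (Quaternion ℝ)) : ℝ :=
  (1 / 2) * ∑ j, Real.sqrt ((Matrix.isHermitian_conjTranspose_mul_self (qf X)).eigenvalues j)

/-- The quaternion Frobenius norm. -/
noncomputable def qFrob {M N : ℕ} (X : Matrix (Fin M) (Fin N) (Quaternion ℝ)) : ℝ :=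
  Real.sqrt (∑ m, ∑ n, ‖X m n‖ ^ 2)

/-- The spectral norm of a quaternion matrix: the square root of the largest eigenvalue
of `f(E)ᴴ f(E)`. -/
noncomputable def qSpectralNorm {N₁ N₂ : ℕ}
    (E : Matrix (Fin N₁) (Fin N₂) (Quaternion ℝ)) : ℝ :=
  ⨆ j, Real.sqrt ((Matrix.isHermitian_conjTranspose_mul_self (qf E)).eigenvalues j)

/-! ### Auxiliary lemmas -/

open Polynomial in
theorem aux_charpoly_unitary_conj {n : Type*} [Fintype n] [DecidableEq n] (W A : Matrix n n ℂ)
    (h1 : W * Wᴴ = 1) (h2 : Wᴴ * W = 1) :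
    (W * A * Wᴴ).charpoly = A.charpoly := by
  have hmap : ∀ (B C : Matrix n n ℂ),
      (B*C).map Polynomial.C = B.map Polynomial.C * C.map Polynomial.C :=
    fun B C => Matrix.map_mul
  have key : charmatrix (W * A * Wᴴ) = W.map Polynomial.C * charmatrix A * Wᴴ.map Polynomial.C := by
    rw [charmatrix, charmatrix]
    simp only [RingHom.mapMatrix_apply, mul_sub, sub_mul]
    rw [← hmap, ← hmap]
    congr 1
    rw [mul_assoc, Matrix.scalar_commute X (fun r => Commute.all _ _), ← mul_assoc, ← hmap, h1]
    simp
  rw [Matrix.charpoly, Matrix.charpoly, key, det_mul, det_mul, mul_comm, ← mul_assoc, ← det_mul,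
    ← hmap, h2]
  simp

open Polynomial in
theorem aux_charpoly_diagonal {n : Type*} [Fintype n] [DecidableEq n] (d : n → ℂ) :
    (diagonal d).charpoly = ∏ i, (X - Polynomial.C (d i)) := by
  have : charmatrix (diagonal d) = diagonal (fun i => X - Polynomial.C (d i)) := by
    ext i j
    by_cases h : i = j
    · subst h; simp [charmatrix_apply_eq]
    · simp [charmatrix_apply_ne _ _ _ h, diagonal_apply_ne _ h]
  rw [Matrix.charpoly, this, det_diagonal]

open Polynomial in
theorem aux_multiset_eig {n : Type*} [Fintype n] [DecidableEq n] {A : Matrix n n ℂ}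
    (hA : A.IsHermitian) (W : Matrix n n ℂ) (d : n → ℝ)
    (h1 : W * Wᴴ = 1) (h2 : Wᴴ * W = 1)
    (hAeq : A = W * diagonal (fun i => (d i : ℂ)) * Wᴴ) :
    Finset.univ.val.map hA.eigenvalues = Finset.univ.val.map d := by
  have c1 : A.charpoly = ∏ i, (X - Polynomial.C ((d i : ℂ))) := by
    rw [hAeq, aux_charpoly_unitary_conj _ _ h1 h2, aux_charpoly_diagonal]
  have c2 : A.charpoly = ∏ i, (X - Polynomial.C ((hA.eigenvalues i : ℂ))) := by
    have hspec := hA.spectral_theorem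
    have hu1 : (hA.eigenvectorUnitary : Matrix n n ℂ) * (hA.eigenvectorUnitary : Matrix n n ℂ)ᴴ = 1 :=
      Matrix.mem_unitaryGroup_iff.mp hA.eigenvectorUnitary.2
    have hu2 : (hA.eigenvectorUnitary : Matrix n n ℂ)ᴴ * (hA.eigenvectorUnitary : Matrix n n ℂ) = 1 :=
      Matrix.mem_unitaryGroup_iff'.mp hA.eigenvectorUnitary.2
    calc A.charpoly = ((hA.eigenvectorUnitary : Matrix n n ℂ) *
          diagonal (RCLike.ofReal ∘ hA.eigenvalues) *
          (hA.eigenvectorUnitary : Matrix n n ℂ)ᴴ).charpoly := by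
            rw [Unitary.conjStarAlgAut_apply, Matrix.star_eq_conjTranspose] at hspec; rw [← hspec]
      _ = _ := by
        rw [aux_charpoly_unitary_conj _ _ hu1 hu2, aux_charpoly_diagonal]
        rfl
  have hprod : ∏ i, (X - Polynomial.C ((hA.eigenvalues i : ℂ))) =
      ∏ i, (X - Polynomial.C ((d i : ℂ))) := by rw [← c1, ← c2]
  have hroots : (Finset.univ.val.map (fun i => ((hA.eigenvalues i : ℝ) : ℂ))) =
      (Finset.univ.val.map (fun i => ((d i : ℝ) : ℂ))) := by
    have r1 := Polynomial.roots_multiset_prod_X_sub_C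
      (Finset.univ.val.map (fun i => ((hA.eigenvalues i : ℝ) : ℂ)))
    have r2 := Polynomial.roots_multiset_prod_X_sub_C
      (Finset.univ.val.map (fun i => ((d i : ℝ) : ℂ)))
    rw [← r1, ← r2, Multiset.map_map, Multiset.map_map]
    exact congrArg Polynomial.roots hprod
  have : Multiset.map Complex.ofReal (Finset.univ.val.map hA.eigenvalues) =
      Multiset.map Complex.ofReal (Finset.univ.val.map d) := by
    rw [Multiset.map_map, Multiset.map_map]; exact hroots
  exact Multiset.map_injective Complex.ofReal_injective this

theorem aux_sum_sqrt_eig {n : Type*} [Fintype n] [DecidableEq n] {A : Matrix n n ℂ}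
    (hA : A.IsHermitian) (W : Matrix n n ℂ) (d : n → ℝ)
    (h1 : W * Wᴴ = 1) (h2 : Wᴴ * W = 1)
    (hAeq : A = W * diagonal (fun i => (d i : ℂ)) * Wᴴ) :
    ∑ j, Real.sqrt (hA.eigenvalues j) = ∑ j, Real.sqrt (d j) := by
  have hm := aux_multiset_eig hA W d h1 h2 hAeq
  calc ∑ j, Real.sqrt (hA.eigenvalues j)
      = ((Finset.univ.val.map hA.eigenvalues).map Real.sqrt).sum := by
        rw [Multiset.map_map]; rfl
    _ = ((Finset.univ.val.map d).map Real.sqrt).sum := by rw [hm]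
    _ = ∑ j, Real.sqrt (d j) := by rw [Multiset.map_map]; rfl

lemma qC1_mul (p q : Quaternion ℝ) : qC1 (p * q) = qC1 p * qC1 q - qC2 p * star (qC2 q) := by
  apply Complex.ext <;>
  simp [qC1, qC2, Complex.mul_re, Complex.mul_im, Quaternion.re_mul, Quaternion.imI_mul] <;> ring

lemma qC2_mul (p q : Quaternion ℝ) : qC2 (p * q) = qC1 p * qC2 q + qC2 p * star (qC1 q) := by
  apply Complex.ext <;>
  simp [qC1, qC2, Complex.mul_re, Complex.mul_im, Quaternion.imJ_mul, Quaternion.imK_mul] <;> ring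

lemma qC1_star (q : Quaternion ℝ) : qC1 (star q) = star (qC1 q) := by
  apply Complex.ext <;> simp [qC1]

lemma qC2_star (q : Quaternion ℝ) : qC2 (star q) = - qC2 q := by
  apply Complex.ext <;> simp [qC2]

lemma qC1_add (p q : Quaternion ℝ) : qC1 (p + q) = qC1 p + qC1 q := by
  apply Complex.ext <;> simp [qC1]
lemma qC2_add (p q : Quaternion ℝ) : qC2 (p + q) = qC2 p + qC2 q := by
  apply Complex.ext <;> simp [qC2]
lemma qC1_zero : qC1 0 = 0 := by apply Complex.ext <;> simp [qC1] <;> rfl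
lemma qC2_zero : qC2 0 = 0 := by apply Complex.ext <;> simp [qC2] <;> rfl
lemma qC1_one : qC1 1 = 1 := by apply Complex.ext <;> simp [qC1] <;> rfl
lemma qC2_one : qC2 1 = 0 := by apply Complex.ext <;> simp [qC2] <;> rfl

def qC1hom : Quaternion ℝ →+ ℂ := ⟨⟨qC1, qC1_zero⟩, qC1_add⟩
def qC2hom : Quaternion ℝ →+ ℂ := ⟨⟨qC2, qC2_zero⟩, qC2_add⟩

lemma qC1_sum {α : Type*} (s : Finset α) (f : α → Quaternion ℝ) :
    qC1 (∑ x ∈ s, f x) = ∑ x ∈ s, qC1 (f x) := map_sum qC1hom f s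
lemma qC2_sum {α : Type*} (s : Finset α) (f : α → Quaternion ℝ) :
    qC2 (∑ x ∈ s, f x) = ∑ x ∈ s, qC2 (f x) := map_sum qC2hom f s

lemma qf_mul {N₁ N₂ N₃ : ℕ} (A : Matrix (Fin N₁) (Fin N₂) (Quaternion ℝ))
    (B : Matrix (Fin N₂) (Fin N₃) (Quaternion ℝ)) : qf (A * B) = qf A * qf B := by
  ext i j
  cases i with
  | inl m => cases j with
    | inl n =>
      simp only [qf, fromBlocks_apply₁₁, Matrix.mul_apply, of_apply, Fintype.sum_sum_type,
        fromBlocks_apply₁₂, fromBlocks_apply₂₁, fromBlocks_apply₂₂, qC1_sum, qC1_mul]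
      simp [Finset.sum_neg_distrib, sub_eq_add_neg, Finset.sum_add_distrib]
    | inr n =>
      simp only [qf, fromBlocks_apply₁₁, Matrix.mul_apply, of_apply, Fintype.sum_sum_type,
        fromBlocks_apply₁₂, fromBlocks_apply₂₁, fromBlocks_apply₂₂, qC2_sum, qC2_mul]
      rw [Finset.sum_add_distrib]
  | inr m => cases j with
    | inl n =>
      simp only [qf, fromBlocks_apply₁₁, Matrix.mul_apply, of_apply, Fintype.sum_sum_type,
        fromBlocks_apply₁₂, fromBlocks_apply₂₁, fromBlocks_apply₂₂, qC2_sum, qC2_mul]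
      rw [star_sum, ← Finset.sum_add_distrib, ← Finset.sum_neg_distrib]
      apply Finset.sum_congr rfl; intros
      simp only [star_add, star_mul', star_star]
      ring
    | inr n =>
      simp only [qf, fromBlocks_apply₁₁, Matrix.mul_apply, of_apply, Fintype.sum_sum_type,
        fromBlocks_apply₁₂, fromBlocks_apply₂₁, fromBlocks_apply₂₂, qC1_sum, qC1_mul]
      rw [star_sum, ← Finset.sum_add_distrib]
      apply Finset.sum_congr rfl; intros
      simp only [star_sub, star_mul', star_star]
      ring

lemma qf_conjTranspose {N₁ N₂ : ℕ} (A : Matrix (Fin N₁) (Fin N₂) (Quaternion ℝ)) :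
    qf Aᴴ = (qf A)ᴴ := by
  ext i j
  cases i <;> cases j <;>
    simp [qf, conjTranspose_apply, qC1_star, qC2_star]

lemma qf_one {N : ℕ} : qf (1 : Matrix (Fin N) (Fin N) (Quaternion ℝ)) = 1 := by
  ext i j
  cases i <;> cases j <;>
    simp [qf, Matrix.one_apply, apply_ite qC1, apply_ite qC2, apply_ite (star : ℂ → ℂ),
      qC1_one, qC2_one, qC1_zero, qC2_zero]

lemma qC1_real (r : ℝ) : qC1 ((r : ℝ) : Quaternion ℝ) = (r : ℂ) := by
  apply Complex.ext <;> simp [qC1]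
lemma qC2_real (r : ℝ) : qC2 ((r : ℝ) : Quaternion ℝ) = 0 := by
  apply Complex.ext <;> simp [qC2]

lemma qf_rToQ {N₁ N₂ : ℕ} (Λ : Matrix (Fin N₁) (Fin N₂) ℝ) :
    qf (rToQ Λ) = fromBlocks (Λ.map (fun r => (r : ℂ))) 0 0 (Λ.map (fun r => (r : ℂ))) := by
  ext i j
  cases i <;> cases j <;>
    simp [qf, rToQ, qC1_real, qC2_real, Complex.conj_ofReal]

lemma aux_diag_prod {N₁ N₂ : ℕ} (Λ : Matrix (Fin N₁) (Fin N₂) ℝ)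
    (hd : ∀ (m : Fin N₁) (n : Fin N₂), (m : ℕ) ≠ (n : ℕ) → Λ m n = 0)
    (σ : Fin N₂ → ℝ) (hσ : ∀ n, σ n = if h : (n : ℕ) < N₁ then Λ ⟨n, h⟩ n else 0)
    (n n' : Fin N₂) :
    ∑ m, Λ m n * Λ m n' = if n = n' then σ n ^ 2 else 0 := by
  by_cases h : n = n'
  · subst h
    rw [if_pos rfl]
    by_cases hn : (n : ℕ) < N₁
    · rw [Finset.sum_eq_single (⟨(n : ℕ), hn⟩ : Fin N₁)]
      · rw [hσ, dif_pos hn]; ring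
      · intro b _ hb
        have : (b : ℕ) ≠ (n : ℕ) := by
          intro hbn; exact hb (Fin.ext hbn)
        rw [hd b n this, zero_mul]
      · intro habs; exact absurd (Finset.mem_univ _) habs
    · rw [hσ, dif_neg hn]
      rw [Finset.sum_eq_zero]
      · norm_num
      intro m _
      have : (m : ℕ) ≠ (n : ℕ) := by
        intro hmn; exact hn (hmn ▸ m.isLt)
      rw [hd m n this, zero_mul]
  · rw [if_neg h]
    apply Finset.sum_eq_zero
    intro m _
    by_cases hm : (m : ℕ) = (n : ℕ)
    · have : (m : ℕ) ≠ (n' : ℕ) := by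
        intro hmn'
        exact h (Fin.ext (hm ▸ hmn' : (n : ℕ) = (n' : ℕ)))
      rw [hd m n' this, mul_zero]
    · rw [hd m n hm, zero_mul]

/-- the quaternion nuclear norm is well defined: any two QSVDs of `Q` have the
same sum of diagonal entries of `Λ`, and this sum equals `½ Σ_j sqrt(λ_j)` where `λ_j` runs
over the eigenvalues of `f(Q)ᴴ f(Q)`. -/
theorem qNuclearNorm_well_defined {N₁ N₂ : ℕ} (Q : Matrix (Fin N₁) (Fin N₂) (Quaternion ℝ))
    (U U' : Matrix (Fin N₁) (Fin N₁) (Quaternion ℝ))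
    (Λ Λ' : Matrix (Fin N₁) (Fin N₂) ℝ)
    (V V' : Matrix (Fin N₂) (Fin N₂) (Quaternion ℝ))
    (h : IsQSVD Q U Λ V) (h' : IsQSVD Q U' Λ' V') :
    (∑ m : Fin N₁, ∑ n : Fin N₂, if (m : ℕ) = (n : ℕ) then Λ m n else 0) =
      (∑ m : Fin N₁, ∑ n : Fin N₂, if (m : ℕ) = (n : ℕ) then Λ' m n else 0) ∧
    (∑ m : Fin N₁, ∑ n : Fin N₂, if (m : ℕ) = (n : ℕ) then Λ m n else 0) =
      qNuclearNorm Q := by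
  suffices key : ∀ (U : Matrix (Fin N₁) (Fin N₁) (Quaternion ℝ))
      (Λ : Matrix (Fin N₁) (Fin N₂) ℝ) (V : Matrix (Fin N₂) (Fin N₂) (Quaternion ℝ)),
      IsQSVD Q U Λ V →
      (∑ m : Fin N₁, ∑ n : Fin N₂, if (m : ℕ) = (n : ℕ) then Λ m n else 0) = qNuclearNorm Q by
    exact ⟨(key U Λ V h).trans (key U' Λ' V' h').symm, key U Λ V h⟩
  clear h h' U U' Λ Λ' V V'
  rintro U Λ V ⟨⟨hU1, hU2⟩, ⟨hV1, hV2⟩, ⟨hdg, hpos⟩, hQ⟩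
  set σ : Fin N₂ → ℝ := fun n => if h : (n : ℕ) < N₁ then Λ ⟨n, h⟩ n else 0 with hσdef
  have hσ : ∀ n, σ n = if h : (n : ℕ) < N₁ then Λ ⟨n, h⟩ n else 0 := fun n => rfl
  have hσ0 : ∀ n, 0 ≤ σ n := by
    intro n; rw [hσ]; split
    · exact hpos _ _
    · exact le_refl 0
  have hfV1 : qf V * (qf V)ᴴ = 1 := by rw [← qf_conjTranspose, ← qf_mul, hV1, qf_one]
  have hfV2 : (qf V)ᴴ * qf V = 1 := by rw [← qf_conjTranspose, ← qf_mul, hV2, qf_one]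
  have hfU2 : (qf U)ᴴ * qf U = 1 := by rw [← qf_conjTranspose, ← qf_mul, hU2, qf_one]
  set d : Fin N₂ ⊕ Fin N₂ → ℝ := Sum.elim (fun n => σ n ^ 2) (fun n => σ n ^ 2) with hddef
  have hLL : (Λ.map (fun r => (r : ℂ)))ᴴ * (Λ.map (fun r => (r : ℂ)))
      = diagonal (fun n => ((σ n ^ 2 : ℝ) : ℂ)) := by
    ext n n'
    rw [Matrix.mul_apply, diagonal_apply]
    have hterm : ∀ m : Fin N₁, (Λ.map (fun r => (r : ℂ)))ᴴ n m * (Λ.map (fun r => (r : ℂ))) m n'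
        = ((Λ m n * Λ m n' : ℝ) : ℂ) := by
      intro m
      simp [conjTranspose_apply, Complex.conj_ofReal]
    rw [Finset.sum_congr rfl (fun m _ => hterm m), ← Complex.ofReal_sum]
    rw [aux_diag_prod Λ hdg σ hσ n n']
    split <;> simp
  have hMM : (qf (rToQ Λ))ᴴ * qf (rToQ Λ) = diagonal (fun i => ((d i : ℝ) : ℂ)) := by
    rw [qf_rToQ, fromBlocks_conjTranspose, fromBlocks_multiply]
    simp only [conjTranspose_zero, Matrix.mul_zero, Matrix.zero_mul, add_zero, zero_add]
    rw [hLL]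
    have hfun : (fun i : Fin N₂ ⊕ Fin N₂ => ((d i : ℝ) : ℂ))
        = Sum.elim (fun n => ((σ n ^ 2 : ℝ) : ℂ)) (fun n => ((σ n ^ 2 : ℝ) : ℂ)) := by
      funext i; cases i <;> rfl
    rw [hfun, ← fromBlocks_diagonal]
  have hA : (qf Q)ᴴ * qf Q = qf V * diagonal (fun i => ((d i : ℝ) : ℂ)) * (qf V)ᴴ := by
    rw [hQ, qf_mul, qf_mul, qf_conjTranspose]
    have habs : ∀ X : Matrix (Fin N₁ ⊕ Fin N₁) (Fin N₂ ⊕ Fin N₂) ℂ,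
        (qf U)ᴴ * (qf U * X) = X := by
      intro X; rw [← Matrix.mul_assoc, hfU2, Matrix.one_mul]
    simp only [conjTranspose_mul, conjTranspose_conjTranspose, Matrix.mul_assoc, habs]
    rw [← hMM]
    simp only [Matrix.mul_assoc]
  have hsum := aux_sum_sqrt_eig (Matrix.isHermitian_conjTranspose_mul_self (qf Q)) (qf V) d
    hfV1 hfV2 hA
  have hd2 : ∑ j, Real.sqrt (d j) = 2 * ∑ n, σ n := by
    rw [Fintype.sum_sum_type]
    have hs : ∀ n, Real.sqrt (σ n ^ 2) = σ n := fun n => Real.sqrt_sq (hσ0 n)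
    simp only [hddef, Sum.elim_inl, Sum.elim_inr, hs]
    ring
  have hdiag : (∑ m : Fin N₁, ∑ n : Fin N₂, if (m : ℕ) = (n : ℕ) then Λ m n else 0)
      = ∑ n, σ n := by
    rw [Finset.sum_comm]
    apply Finset.sum_congr rfl
    intro n _
    by_cases hn : (n : ℕ) < N₁
    · rw [Finset.sum_eq_single (⟨(n : ℕ), hn⟩ : Fin N₁)]
      · rw [if_pos rfl, hσ, dif_pos hn]
      · intro b _ hb
        rw [if_neg]; intro hbn; exact hb (Fin.ext hbn)
      · intro habs; exact absurd (Finset.mem_univ _) habs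
    · rw [hσ, dif_neg hn]
      apply Finset.sum_eq_zero
      intro m _
      rw [if_neg]; intro hmn; exact hn (hmn ▸ m.isLt)
  rw [hdiag, qNuclearNorm, hsum, hd2]; ring
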